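/- If p is a monic real polynomial of degree n satisfying the generalized eigenvalue equation (x - a^{-1}q) p(qx) + (a^{-1}q - b^{-1}x) p(x) = λ ( (x - q) p(q^{-1}x) + (q - bx) p(x) ) for all real x and some real number λ, then necessarily λ = -b^{-1} q^n and p equals the monic Pastro polynomial P_n(x;a,b;q). -/

import Mathlib

/-- The q-Pochhammer symbol `(z;q)_k = ∏_{j=0}^{k-1} (1 - z q^j)`. -/
noncomputable def qPoch (q z : ℝ) (k : ℕ) : ℝ :=
  ∏ j ∈ Finset.range k, (1 - z * q ^ j)

/-- Coefficient `c_{n,k}` of the monic Pastro polynomial. -/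
noncomputable def pastroCoeff (q a b : ℝ) (n k : ℕ) : ℝ :=
  (qPoch q (a⁻¹ * b * q ^ (1 - (n : ℤ))) n * qPoch q q n /
      (qPoch q (q ^ (-(n : ℤ))) n * qPoch q b n)) *
    (qPoch q (q ^ (-(n : ℤ))) k * qPoch q b k /
      (qPoch q (a⁻¹ * b * q ^ (1 - (n : ℤ))) k * qPoch q q k))

/-- The monic Pastro polynomial `P_n(x;a,b;q)`. -/
noncomputable def pastroP (q a b : ℝ) (n : ℕ) (x : ℝ) : ℝ :=
  ∑ k ∈ Finset.range (n + 1), pastroCoeff q a b n k * x ^ k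

open Polynomial

lemma qPoch_succ' (q z : ℝ) (k : ℕ) : qPoch q z (k+1) = qPoch q z k * (1 - z * q ^ k) :=
  Finset.prod_range_succ _ k

lemma coeff_comp_C_mul_X' (p : ℝ[X]) (q : ℝ) (k : ℕ) :
    (p.comp (C q * X)).coeff k = q ^ k * p.coeff k := by
  induction p using Polynomial.induction_on' with
  | add f g hf hg => simp [add_comp, hf, hg, mul_add]
  | monomial m r =>
    rw [monomial_comp]
    simp only [mul_pow, ← C_pow, coeff_C_mul, coeff_monomial, coeff_X_pow]
    by_cases h : m = k
    · simp [h, mul_comm]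
    · simp [h, Ne.symm h]

section NZ
variable {q a b : ℝ} (hq : q ≠ 0) (hq1 : ∀ k : ℤ, k ≠ 0 → q ^ k ≠ 1)
  (ha : a ≠ 0) (hb : b ≠ 0)
  (hbq : ∀ m : ℤ, b * q ^ m ≠ 1) (habq : ∀ m : ℤ, a⁻¹ * b * q ^ m ≠ 1)

include hq hq1 in
lemma qPoch_q_ne' (m : ℕ) : qPoch q q m ≠ 0 := by
  unfold qPoch
  apply Finset.prod_ne_zero_iff.2
  intro j _
  have h : q ^ ((j : ℤ) + 1) ≠ 1 := hq1 _ (by omega)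
  rw [zpow_add₀ hq, zpow_one, zpow_natCast] at h
  intro hcon
  exact h (by linarith [sub_eq_zero.mp hcon])

include hbq in
lemma qPoch_b_ne' (m : ℕ) : qPoch q b m ≠ 0 := by
  unfold qPoch
  apply Finset.prod_ne_zero_iff.2
  intro j _
  have h : b * q ^ (j : ℤ) ≠ 1 := hbq _
  rw [zpow_natCast] at h
  intro hcon
  exact h (by linarith [sub_eq_zero.mp hcon])

include hq habq in
lemma qPoch_ab_ne' (n : ℕ) (m : ℕ) : qPoch q (a⁻¹ * b * q ^ (1 - (n : ℤ))) m ≠ 0 := by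
  unfold qPoch
  apply Finset.prod_ne_zero_iff.2
  intro j _
  have h : a⁻¹ * b * q ^ (1 - (n : ℤ) + (j : ℤ)) ≠ 1 := habq _
  rw [zpow_add₀ hq, zpow_natCast] at h
  intro hcon
  apply h
  have := sub_eq_zero.mp hcon
  linarith [this.symm]

include hq hq1 in
lemma qPoch_qn_ne' (n : ℕ) (m : ℕ) (hm : m ≤ n) : qPoch q ((q : ℝ) ^ (-(n : ℤ))) m ≠ 0 := by
  unfold qPoch
  apply Finset.prod_ne_zero_iff.2
  intro j hj
  simp only [Finset.mem_range] at hj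
  have h : q ^ ((j : ℤ) - (n : ℤ)) ≠ 1 := hq1 _ (by omega)
  rw [sub_eq_add_neg, zpow_add₀ hq, zpow_natCast, mul_comm] at h
  intro hcon
  exact h (by linarith [sub_eq_zero.mp hcon])

include hq hq1 hbq habq in
lemma pastroCoeff_self (n : ℕ) : pastroCoeff q a b n n = 1 := by
  unfold pastroCoeff
  rw [div_mul_div_comm, mul_comm (qPoch q (q ^ (-(n:ℤ))) n * qPoch q b n)]
  exact div_self (mul_ne_zero
    (mul_ne_zero (qPoch_ab_ne' hq habq n n) (qPoch_q_ne' hq hq1 n))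
    (mul_ne_zero (qPoch_qn_ne' hq hq1 n n le_rfl) (qPoch_b_ne' hbq n)))

omit hbq in
include hq hq1 ha hb habq in
lemma pastro_step (n k : ℕ) (hk : k < n) :
    pastroCoeff q a b n k * ((q ^ (n - k) - 1) * (b⁻¹ - q ^ k)) =
      pastroCoeff q a b n (k + 1) * ((1 - q ^ (k + 1)) * (b⁻¹ * q ^ (n - k) - a⁻¹ * q)) := by
  have h5 : qPoch q q k ≠ 0 := qPoch_q_ne' hq hq1 k
  have h6 : qPoch q (a⁻¹ * b * q ^ (1 - (n : ℤ))) k ≠ 0 := qPoch_ab_ne' hq habq n k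
  have hf1 : (1 : ℝ) - q * q ^ k ≠ 0 := by
    have := qPoch_q_ne' hq hq1 (k+1)
    rw [qPoch_succ'] at this
    exact right_ne_zero_of_mul this
  have hf2 : (1 : ℝ) - a⁻¹ * b * q ^ (1 - (n : ℤ)) * q ^ k ≠ 0 := by
    have := qPoch_ab_ne' hq habq n (k+1)
    rw [qPoch_succ'] at this
    exact right_ne_zero_of_mul this
  set X1 : ℝ := 1 - q ^ (-(n : ℤ)) * q ^ k with hX1
  set X2 : ℝ := 1 - b * q ^ k with hX2
  set X3 : ℝ := 1 - a⁻¹ * b * q ^ (1 - (n : ℤ)) * q ^ k with hX3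
  set X4 : ℝ := 1 - q * q ^ k with hX4
  have hrec : pastroCoeff q a b n (k + 1) * (X3 * X4) = pastroCoeff q a b n k * (X1 * X2) := by
    unfold pastroCoeff
    rw [qPoch_succ', qPoch_succ', qPoch_succ', qPoch_succ']
    have haux : ∀ A R1 R X Y : ℝ, R1 * X = R * Y → A * R1 * X = A * R * Y := by
      intro A R1 R X Y h; rw [mul_assoc, h, mul_assoc]
    apply haux
    rw [div_mul_eq_mul_div, div_mul_eq_mul_div,
      div_eq_div_iff (mul_ne_zero (mul_ne_zero h6 hf2) (mul_ne_zero h5 hf1))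
        (mul_ne_zero h6 h5)]
    ring
  have scalar : ((q ^ (n - k) - 1) * (b⁻¹ - q ^ k)) * (X3 * X4) =
      ((1 - q ^ (k + 1)) * (b⁻¹ * q ^ (n - k) - a⁻¹ * q)) * (X1 * X2) := by
    obtain ⟨m, rfl⟩ : ∃ m, n = k + (m + 1) := ⟨n - k - 1, by omega⟩
    have e0 : k + (m + 1) - k = m + 1 := by omega
    have e1 : (q : ℝ) ^ (-((k + (m + 1) : ℕ) : ℤ)) = (q ^ (k + (m + 1)))⁻¹ := by
      rw [zpow_neg, zpow_natCast]
    have e2 : (q : ℝ) ^ (1 - ((k + (m + 1) : ℕ) : ℤ)) = q / q ^ (k + (m + 1)) := by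
      rw [zpow_sub₀ hq, zpow_one, zpow_natCast]
    rw [hX1, hX2, hX3, hX4, e0, e1, e2]
    have hqk : (q : ℝ) ^ k ≠ 0 := pow_ne_zero _ hq
    field_simp
    ring
  have hX34 : X3 * X4 ≠ 0 := mul_ne_zero hf2 hf1
  apply mul_right_cancel₀ hX34
  calc pastroCoeff q a b n k * ((q ^ (n - k) - 1) * (b⁻¹ - q ^ k)) * (X3 * X4)
      = pastroCoeff q a b n k * (((q ^ (n - k) - 1) * (b⁻¹ - q ^ k)) * (X3 * X4)) := by ring
    _ = pastroCoeff q a b n k * (((1 - q ^ (k + 1)) * (b⁻¹ * q ^ (n - k) - a⁻¹ * q)) * (X1 * X2)) := by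
        rw [scalar]
    _ = (pastroCoeff q a b n k * (X1 * X2)) * ((1 - q ^ (k + 1)) * (b⁻¹ * q ^ (n - k) - a⁻¹ * q)) := by
        ring
    _ = (pastroCoeff q a b n (k+1) * (X3 * X4)) * ((1 - q ^ (k + 1)) * (b⁻¹ * q ^ (n - k) - a⁻¹ * q)) := by
        rw [hrec]
    _ = pastroCoeff q a b n (k + 1) * ((1 - q ^ (k + 1)) * (b⁻¹ * q ^ (n - k) - a⁻¹ * q)) * (X3 * X4) := by
        ring
end NZ

/-- Any monic polynomial solution of degree `n` of the generalized eigenvalue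
problem is the Pastro polynomial `P_n`, with eigenvalue `λ = -b⁻¹ q^n`. -/
theorem pastro_GEVP_unique (q a b : ℝ) (hq : q ≠ 0) (hq1 : ∀ k : ℤ, k ≠ 0 → q ^ k ≠ 1)
    (ha : a ≠ 0) (hb : b ≠ 0)
    (hbq : ∀ m : ℤ, b * q ^ m ≠ 1) (habq : ∀ m : ℤ, a⁻¹ * b * q ^ m ≠ 1)
    (n : ℕ) (p : Polynomial ℝ) (hmonic : p.Monic) (hdeg : p.natDegree = n) (lam : ℝ)
    (heq : ∀ x : ℝ,
      (x - a⁻¹ * q) * p.eval (q * x) + (a⁻¹ * q - b⁻¹ * x) * p.eval x =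
        lam * ((x - q) * p.eval (q⁻¹ * x) + (q - b * x) * p.eval x)) :
    lam = -b⁻¹ * q ^ n ∧ ∀ x : ℝ, p.eval x = pastroP q a b n x := by
  -- coefficient equations
  have hpoly : X * (p.comp (C q * X)) - C (a⁻¹*q) * (p.comp (C q * X))
        + C (a⁻¹*q) * p - C b⁻¹ * (X * p)
      = C lam * (X * (p.comp (C q⁻¹ * X)) - C q * (p.comp (C q⁻¹ * X))
        + C q * p - C b * (X * p)) := by
    apply Polynomial.funext
    intro x
    simp only [eval_mul, eval_add, eval_sub, eval_C, eval_X, eval_comp]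
    linear_combination heq x
  have E : ∀ k : ℕ,
      q ^ k * p.coeff k - a⁻¹ * q * (q ^ (k+1) * p.coeff (k+1)) + a⁻¹ * q * p.coeff (k+1)
        - b⁻¹ * p.coeff k
      = lam * ((q ^ k)⁻¹ * p.coeff k - q * ((q ^ (k+1))⁻¹ * p.coeff (k+1))
          + q * p.coeff (k+1) - b * p.coeff k) := by
    intro k
    have h := congrArg (fun P : ℝ[X] => P.coeff (k+1)) hpoly
    simp only [coeff_sub, coeff_add, coeff_C_mul, coeff_X_mul, coeff_comp_C_mul_X', mul_sub,
      mul_add, inv_pow] at h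
    linear_combination h
  have hcn : p.coeff n = 1 := by rw [← hdeg]; exact hmonic.coeff_natDegree
  have hcn1 : p.coeff (n+1) = 0 := coeff_eq_zero_of_natDegree_lt (by omega)
  have hqn : (q : ℝ) ^ n ≠ 0 := pow_ne_zero _ hq
  have hbqn : (1 : ℝ) - b * q ^ n ≠ 0 := by
    have h := hbq (n : ℤ)
    rw [zpow_natCast] at h
    intro hcon; exact h (by linarith [sub_eq_zero.mp hcon])
  -- determine lam
  have hlam : lam = -b⁻¹ * q ^ n := by
    have h := E n
    rw [hcn, hcn1] at h
    have hqq : (q : ℝ) ^ n * (q ^ n)⁻¹ = 1 := mul_inv_cancel₀ hqn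
    have hbb : b * b⁻¹ = 1 := mul_inv_cancel₀ hb
    have key : (lam - (-b⁻¹ * q ^ n)) * ((q ^ n)⁻¹ * (1 - b * q ^ n)) = 0 := by
      linear_combination -h + b⁻¹ * hqq - lam * b * hqq - b * b⁻¹ * q^n * hqq - q^n * hbb
    have hne : ((q : ℝ) ^ n)⁻¹ * (1 - b * q ^ n) ≠ 0 :=
      mul_ne_zero (inv_ne_zero hqn) hbqn
    have := (mul_eq_zero.1 key).resolve_right hne
    linarith [sub_eq_zero.mp this]
  -- recurrence for coefficients
  have hrecur : ∀ k, k < n →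
      p.coeff k * ((q ^ (n - k) - 1) * (b⁻¹ - q ^ k)) =
        p.coeff (k+1) * ((1 - q ^ (k + 1)) * (b⁻¹ * q ^ (n - k) - a⁻¹ * q)) := by
    intro k hk
    have h := E k
    rw [hlam] at h
    obtain ⟨m, rfl⟩ : ∃ m, n = k + (m + 1) := ⟨n - k - 1, by omega⟩
    have e0 : k + (m + 1) - k = m + 1 := by omega
    rw [e0]
    have hqk : (q : ℝ) ^ k ≠ 0 := pow_ne_zero _ hq
    have hqk1 : (q : ℝ) ^ (k+1) ≠ 0 := pow_ne_zero _ hq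
    have g1 : ((q : ℝ) ^ k)⁻¹ = q ^ (m+1) * (q ^ (k + (m+1)))⁻¹ := by
      rw [show (q:ℝ)^(k+(m+1)) = q^k * q^(m+1) from pow_add q k (m+1), mul_inv,
        mul_comm ((q ^ k)⁻¹), ← mul_assoc, mul_inv_cancel₀ (pow_ne_zero (m+1) hq), one_mul]
    have g2 : ((q : ℝ) ^ (k+1))⁻¹ = q ^ m * (q ^ (k + (m+1)))⁻¹ := by
      rw [show (q:ℝ)^(k+(m+1)) = q^(k+1) * q^m by rw [← pow_add]; ring_nf, mul_inv,
        mul_comm ((q ^ (k+1))⁻¹), ← mul_assoc, mul_inv_cancel₀ (pow_ne_zero m hq), one_mul]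
    rw [g1, g2] at h
    have ht : (q : ℝ) ^ (k + (m+1)) * (q ^ (k + (m+1)))⁻¹ = 1 :=
      mul_inv_cancel₀ (pow_ne_zero _ hq)
    have hbb : b * b⁻¹ = 1 := mul_inv_cancel₀ hb
    linear_combination h - b⁻¹ * q^(m+1) * p.coeff k * ht + b⁻¹ * q * q^m * p.coeff (k+1) * ht +
      p.coeff k * q * q^m * q^k * hbb
  -- uniqueness by downward induction
  have main : ∀ m : ℕ, m ≤ n → p.coeff (n - m) = pastroCoeff q a b n (n - m) := by
    intro m
    induction m with
    | zero =>
      intro _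
      simpa [hcn] using (pastroCoeff_self hq hq1 hbq habq n).symm
    | succ m ih =>
      intro hm
      set k := n - (m + 1) with hkdef
      have hkn : k < n := by omega
      have hk1 : k + 1 = n - m := by omega
      have h1 := hrecur k hkn
      have h2 := pastro_step hq hq1 ha hb habq n k hkn
      have h3 : p.coeff (k+1) = pastroCoeff q a b n (k+1) := by
        rw [hk1]; exact ih (by omega)
      rw [h3] at h1
      rw [← h2] at h1
      -- cancel the nonzero factor
      have hD : ((q : ℝ) ^ (n - k) - 1) * (b⁻¹ - q ^ k) ≠ 0 := by
        apply mul_ne_zero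
        · have h := hq1 ((n : ℤ) - k) (by omega)
          rw [show ((n:ℤ) - k) = ((n - k : ℕ) : ℤ) by omega, zpow_natCast] at h
          exact sub_ne_zero.mpr h
        · have h := hbq (k : ℤ)
          rw [zpow_natCast] at h
          intro hcon
          apply h
          have : b⁻¹ = (q:ℝ)^k := by linarith [sub_eq_zero.mp hcon]
          rw [← this]; exact mul_inv_cancel₀ hb
      exact mul_right_cancel₀ hD h1
  have key : ∀ k, k ≤ n → p.coeff k = pastroCoeff q a b n k := by
    intro k hk
    have := main (n - k) (by omega)
    rwa [Nat.sub_sub_self hk] at this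
  refine ⟨hlam, fun x => ?_⟩
  rw [eval_eq_sum_range, hdeg, pastroP]
  exact Finset.sum_congr rfl fun k hk => by
    rw [key k (by simpa [Nat.lt_succ_iff] using Finset.mem_range.mp hk)]
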